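/- Let R = 0.77, and for α ∈ (0, R) let x(α), y(α) ∈ (0,1) denote the unique solutions of (x - 1)/ln x = α and (y - 1)/ln y = α/R respectively. Then there exists α* ∈ [0.6442, 0.645] such that 1 - x(α*) = 2(1 - y(α*)), i.e., the erasure factors of the baseline and naive-WOM systems coincide at α*. -/

import Mathlib

open Real Set

/-- Auxiliary: the map `t ↦ (t-1)/log t` is injective on `(0,1)`:
strict version yielding `False` from `a < b`. -/
private lemma fAux {a b : ℝ} (ha : a ∈ Set.Ioo (0:ℝ) 1) (hb : b ∈ Set.Ioo (0:ℝ) 1)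
    (hab : a < b) (h : (a - 1) / Real.log a = (b - 1) / Real.log b) : False := by
  obtain ⟨ha0, ha1⟩ := ha
  obtain ⟨hb0, hb1⟩ := hb
  have hla : Real.log a < 0 := Real.log_neg ha0 ha1
  have hlb : Real.log b < 0 := Real.log_neg hb0 hb1
  set c := (a - 1) / Real.log a with hc
  have hcpos : 0 < c := div_pos_of_neg_of_neg (by linarith) hla
  have hea : c * Real.log a = a - 1 := div_mul_cancel₀ _ (ne_of_lt hla)
  have heb : c * Real.log b = b - 1 := by
    rw [h]; exact div_mul_cancel₀ _ (ne_of_lt hlb)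
  have h1a : (0:ℝ) < 1 - a := by linarith
  have hlam : 0 < (1-b)/(1-a) := div_pos (by linarith) h1a
  have hmu : 0 < (b-a)/(1-a) := div_pos (by linarith) h1a
  have hne : (1:ℝ) - a ≠ 0 := ne_of_gt h1a
  have hsum : (1-b)/(1-a) + (b-a)/(1-a) = 1 := by field_simp; ring
  have hconc := strictConcaveOn_log_Ioi.2 (Set.mem_Ioi.2 ha0)
      (Set.mem_Ioi.2 one_pos) (ne_of_lt ha1) hlam hmu hsum
  have hcomb : ((1-b)/(1-a)) • a + ((b-a)/(1-a)) • (1:ℝ) = b := by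
    simp only [smul_eq_mul, mul_one]
    field_simp
    ring
  rw [hcomb] at hconc
  simp only [smul_eq_mul, Real.log_one, mul_zero, add_zero] at hconc
  -- hconc : (1-b)/(1-a) * Real.log a < Real.log b
  have hlin : c * Real.log b = c * ((1-b)/(1-a) * Real.log a) := by
    rw [heb, mul_comm ((1-b)/(1-a)), ← mul_assoc, hea]
    field_simp
    ring
  have heq2 : Real.log b = (1-b)/(1-a) * Real.log a :=
    mul_left_cancel₀ (ne_of_gt hcpos) hlin
  linarith

/-- The map `t ↦ (t-1)/log t` is injective on `(0,1)`. -/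
private lemma fInj {a b : ℝ} (ha : a ∈ Set.Ioo (0:ℝ) 1) (hb : b ∈ Set.Ioo (0:ℝ) 1)
    (h : (a - 1) / Real.log a = (b - 1) / Real.log b) : a = b := by
  rcases lt_trichotomy a b with hlt | he | hgt
  · exact (fAux ha hb hlt h).elim
  · exact he
  · exact (fAux hb ha hgt h.symm).elim

private noncomputable def Gfun : ℝ → ℝ :=
  fun t => (2*t - 2) / Real.log (2*t - 1) - 0.77 * ((t - 1) / Real.log t)

private lemma Geq {t : ℝ} (h1 : 0 < 2*t - 1) (h2 : 2*t - 1 < 1) (h0 : 0 < t) (h3 : t < 1) :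
    Gfun t = (1 - t) * ((77 * Real.log (2*t-1) - 200 * Real.log t) / 100)
      / (Real.log (2*t-1) * Real.log t) := by
  have hla : Real.log (2*t-1) ≠ 0 := ne_of_lt (Real.log_neg h1 h2)
  have hlb : Real.log t ≠ 0 := ne_of_lt (Real.log_neg h0 h3)
  unfold Gfun
  field_simp
  ring

private lemma logcmp {t : ℝ} (h1 : 0 < 2*t - 1) (h0 : 0 < t) (hpow : (2*t-1)^77 < t^200) :
    77 * Real.log (2*t-1) < 200 * Real.log t := by
  have := Real.log_lt_log (by positivity : (0:ℝ) < (2*t-1)^77) hpow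
  rw [Real.log_pow, Real.log_pow] at this
  push_cast at this
  linarith

private lemma Gneg {t : ℝ} (h1 : 0 < 2*t - 1) (h2 : 2*t - 1 < 1) (h0 : 0 < t) (h3 : t < 1)
    (hpow : (2*t-1)^77 < t^200) : Gfun t < 0 := by
  have hla : Real.log (2*t-1) < 0 := Real.log_neg h1 h2
  have hlb : Real.log t < 0 := Real.log_neg h0 h3
  have hcmp := logcmp h1 h0 hpow
  rw [Geq h1 h2 h0 h3]
  exact div_neg_of_neg_of_pos
    (mul_neg_of_pos_of_neg (by linarith) (by linarith))
    (mul_pos_of_neg_of_neg hla hlb)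

private lemma Gpos {t : ℝ} (h1 : 0 < 2*t - 1) (h2 : 2*t - 1 < 1) (h0 : 0 < t) (h3 : t < 1)
    (hpow : t^200 < (2*t-1)^77) : 0 < Gfun t := by
  have hla : Real.log (2*t-1) < 0 := Real.log_neg h1 h2
  have hlb : Real.log t < 0 := Real.log_neg h0 h3
  have hcmp : 200 * Real.log t < 77 * Real.log (2*t-1) := by
    have := Real.log_lt_log (by positivity : (0:ℝ) < t^200) hpow
    rw [Real.log_pow, Real.log_pow] at this
    push_cast at this
    linarith
  rw [Geq h1 h2 h0 h3]
  exact div_pos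
    (mul_pos (by linarith) (by linarith))
    (mul_pos_of_neg_of_neg hla hlb)

private lemma log_y1_lb : (-0.367745 : ℝ) < Real.log 0.6923 := by
  have h2 : Real.log ((0.6923:ℝ)^17 * 512) = 17 * Real.log 0.6923 + 9 * Real.log 2 := by
    rw [Real.log_mul (by positivity) (by norm_num), Real.log_pow,
        show (512:ℝ) = 2^9 by norm_num, Real.log_pow]
    push_cast
    ring
  have h3 : (1:ℝ) - ((0.6923:ℝ)^17 * 512)⁻¹ ≤ Real.log ((0.6923:ℝ)^17 * 512) :=
    Real.one_sub_inv_le_log_of_pos (by positivity)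
  have h4 := Real.log_two_lt_d9
  have h5 : (1:ℝ) - ((0.6923:ℝ)^17 * 512)⁻¹ > 17 * (-0.367745) + 9 * 0.6931471808 := by
    norm_num
  linarith

private lemma log_y2_ub : Real.log 0.6929 < -0.3668 := by
  have h2 : Real.log ((0.6929:ℝ)^17 * 512) = 17 * Real.log 0.6929 + 9 * Real.log 2 := by
    rw [Real.log_mul (by positivity) (by norm_num), Real.log_pow,
        show (512:ℝ) = 2^9 by norm_num, Real.log_pow]
    push_cast
    ring
  have h3 : Real.log ((0.6929:ℝ)^17 * 512) ≤ (0.6929:ℝ)^17 * 512 - 1 :=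
    Real.log_le_sub_one_of_pos (by positivity)
  have h4 := Real.log_two_gt_d9
  have h5 : (0.6929:ℝ)^17 * 512 - 1 < 17 * (-0.3668) + 9 * 0.6931471803 := by
    norm_num
  linarith

private lemma alpha_lb {t : ℝ} (h1 : 0.6923 ≤ t) (h2 : t ≤ 0.6929) :
    (0.6442 : ℝ) ≤ 0.77 * ((t - 1) / Real.log t) := by
  have h0 : (0:ℝ) < t := by linarith
  have hlt : Real.log t < 0 := Real.log_neg h0 (by linarith)
  have hmono : Real.log 0.6923 + (t - 0.6923)/t ≤ Real.log t := by
    have hd := Real.log_le_sub_one_of_pos (x := 0.6923/t) (by positivity)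
    rw [Real.log_div (by norm_num) (ne_of_gt h0)] at hd
    have ht : (0.6923:ℝ)/t - 1 = -((t - 0.6923)/t) := by field_simp; ring
    rw [ht] at hd
    linarith
  have hstep : (t - 0.6923) * (10/7) ≤ (t - 0.6923)/t := by
    rw [le_div_iff₀ h0]
    nlinarith [mul_nonneg (by linarith : (0:ℝ) ≤ t - 0.6923) (by linarith : (0:ℝ) ≤ 0.7 - t)]
  have hkey : Real.log 0.6923 + (t - 0.6923) * (10/7) ≤ Real.log t := by linarith
  have hlb := log_y1_lb
  have hrw : 0.77 * ((t - 1) / Real.log t) = (0.77 * (1 - t)) / (-Real.log t) := by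
    rw [div_neg]
    field_simp
    ring
  rw [hrw, le_div_iff₀ (by linarith : (0:ℝ) < -Real.log t)]
  linarith

private lemma alpha_ub {t : ℝ} (h1 : 0.6923 ≤ t) (h2 : t ≤ 0.6929) :
    0.77 * ((t - 1) / Real.log t) ≤ (0.645 : ℝ) := by
  have h0 : (0:ℝ) < t := by linarith
  have hlt : Real.log t < 0 := Real.log_neg h0 (by linarith)
  have hd := Real.log_le_sub_one_of_pos (x := t/0.6929) (by positivity)
  rw [Real.log_div (ne_of_gt h0) (by norm_num)] at hd
  -- hd : log t - log 0.6929 ≤ t/0.6929 - 1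
  have hv : t/0.6929 ≤ 1 + (t - 0.6929) * (10/7) := by
    rw [div_le_iff₀ (by norm_num : (0:ℝ) < 0.6929)]
    nlinarith
  have hkey : Real.log t ≤ Real.log 0.6929 + (t - 0.6929) * (10/7) := by linarith
  have hub := log_y2_ub
  have hrw : 0.77 * ((t - 1) / Real.log t) = (0.77 * (1 - t)) / (-Real.log t) := by
    rw [div_neg]
    field_simp
    ring
  rw [hrw, div_le_iff₀ (by linarith : (0:ℝ) < -Real.log t)]
  linarith

/-- Let `R = 0.77`, and for `α ∈ (0, R)` let `x α, y α ∈ (0,1)` denote the unique solutions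
of `(x - 1)/ln x = α` and `(y - 1)/ln y = α/R` respectively. Then there exists
`α* ∈ [0.6442, 0.645]` with `1 - x α* = 2 (1 - y α*)`, i.e. the erasure factors of the
baseline and naive-WOM systems coincide at `α*`. -/
theorem naiveWOM_baseline_crossover (x y : ℝ → ℝ)
    (hx : ∀ α ∈ Set.Ioo (0:ℝ) 0.77,
      x α ∈ Set.Ioo (0:ℝ) 1 ∧ (x α - 1) / Real.log (x α) = α)
    (hy : ∀ α ∈ Set.Ioo (0:ℝ) 0.77,
      y α ∈ Set.Ioo (0:ℝ) 1 ∧ (y α - 1) / Real.log (y α) = α / 0.77) :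
    ∃ α ∈ Set.Icc (0.6442:ℝ) 0.645, 1 - x α = 2 * (1 - y α) := by
  -- continuity of Gfun on [0.6923, 0.6929]
  have hGc : ContinuousOn Gfun (Set.Icc (0.6923:ℝ) 0.6929) := by
    intro t ht
    obtain ⟨ht1, ht2⟩ := ht
    have h1 : (0:ℝ) < 2*t - 1 := by linarith
    have h2 : 2*t - 1 < 1 := by linarith
    have h0 : (0:ℝ) < t := by linarith
    have h3 : t < 1 := by linarith
    apply ContinuousAt.continuousWithinAt
    have hf : ContinuousAt (fun s : ℝ => 2*s - 1) t := by fun_prop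
    have hA : ContinuousAt (fun s : ℝ => Real.log (2*s - 1)) t := by
      exact (Real.continuousAt_log (ne_of_gt h1)).comp (f := fun s : ℝ => 2*s - 1) hf
    have hB : ContinuousAt Real.log t := Real.continuousAt_log (ne_of_gt h0)
    exact ((by fun_prop : ContinuousAt (fun s : ℝ => 2*s - 2) t).div hA
        (ne_of_lt (Real.log_neg h1 h2))).sub
      (continuousAt_const.mul (((by fun_prop : ContinuousAt (fun s : ℝ => s - 1) t).div hB
        (ne_of_lt (Real.log_neg h0 h3)))))
  have hG1 : Gfun 0.6923 < 0 := by
    apply Gneg (by norm_num) (by norm_num) (by norm_num) (by norm_num)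
    norm_num
  have hG2 : 0 < Gfun 0.6929 := by
    apply Gpos (by norm_num) (by norm_num) (by norm_num) (by norm_num)
    norm_num
  obtain ⟨t, htmem, htG⟩ :=
    intermediate_value_Icc (by norm_num : (0.6923:ℝ) ≤ 0.6929) hGc
      ⟨le_of_lt hG1, le_of_lt hG2⟩
  obtain ⟨ht1, ht2⟩ := htmem
  have h1 : (0:ℝ) < 2*t - 1 := by linarith
  have h2 : 2*t - 1 < 1 := by linarith
  have h0 : (0:ℝ) < t := by linarith
  have h3 : t < 1 := by linarith
  set α : ℝ := 0.77 * ((t - 1) / Real.log t) with hαdef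
  have hlbα : (0.6442:ℝ) ≤ α := alpha_lb ht1 ht2
  have hubα : α ≤ (0.645:ℝ) := alpha_ub ht1 ht2
  have hαIoo : α ∈ Set.Ioo (0:ℝ) 0.77 := ⟨by linarith, by linarith⟩
  obtain ⟨hxm, hxe⟩ := hx α hαIoo
  obtain ⟨hym, hye⟩ := hy α hαIoo
  have hdiv : α / 0.77 = (t - 1) / Real.log t := by
    rw [hαdef, mul_comm, mul_div_assoc, div_self (by norm_num : (0.77:ℝ) ≠ 0), mul_one]
  have hyeq : y α = t := fInj hym ⟨h0, h3⟩ (by rw [hye, hdiv])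
  have hGt : (2*t - 2) / Real.log (2*t - 1) = α := by
    have : Gfun t = 0 := htG
    unfold Gfun at this
    linarith
  have hxeq : x α = 2*t - 1 := by
    apply fInj hxm ⟨h1, h2⟩
    rw [hxe, ← hGt]
    ring
  refine ⟨α, ⟨hlbα, hubα⟩, ?_⟩
  rw [hxeq, hyeq]
  ring
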